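/- Let ω > 0 with ω ≠ 1, γ = 1/(1−ω²), σ ∈ ℝ, and fix t₀ ∈ ℝ. For v₀ > 0 let t₁(v₀) = inf{ t > t₀ : x(t; t₀, v₀) = σ } be the time of the next impact, where x(t; t₀, v₀) = (σ − γ·cos(ωt₀))·cos(t−t₀) + (−v₀ + ωγ·sin(ωt₀))·sin(t−t₀) + γ·cos(ωt). Then for all sufficiently large v₀ the infimum is attained with t₁(v₀) ∈ (t₀, t₀ + 2π), and as v₀ → ∞ one has t₁(v₀) − t₀ → π and v₀·(t₁(v₀) − t₀ − π) → g(t₀), where g(t) = 2σ − γ·(cos(ωt) + cos(ω(t+π))). In particular the time between impacts tends to π as the impact velocity increases. -/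

import Mathlib

open Real

private lemma sin_lip' (a b : ℝ) : |Real.sin a - Real.sin b| ≤ |a - b| := by
  rw [Real.sin_sub_sin, abs_mul, abs_mul, abs_two]
  have h4 : |Real.sin ((a - b) / 2)| * |Real.cos ((a + b) / 2)| ≤ |a - b| / 2 := by
    calc |Real.sin ((a - b) / 2)| * |Real.cos ((a + b) / 2)|
        ≤ |(a - b) / 2| * 1 :=
          mul_le_mul Real.abs_sin_le_abs (Real.abs_cos_le_one _) (abs_nonneg _) (abs_nonneg _)
      _ = |a - b| / 2 := by rw [abs_div, abs_two, mul_one]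
  linarith

private lemma cos_lip' (a b : ℝ) : |Real.cos a - Real.cos b| ≤ |a - b| := by
  rw [Real.cos_sub_cos, abs_mul, abs_mul, abs_neg, abs_two]
  have h4 : |Real.sin ((a + b) / 2)| * |Real.sin ((a - b) / 2)| ≤ |a - b| / 2 := by
    calc |Real.sin ((a + b) / 2)| * |Real.sin ((a - b) / 2)|
        ≤ 1 * |(a - b) / 2| :=
          mul_le_mul (Real.abs_sin_le_one _) Real.abs_sin_le_abs (abs_nonneg _) zero_le_one
      _ = |a - b| / 2 := by rw [abs_div, abs_two, one_mul]
  linarith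

private lemma cube_bound' {y : ℝ} (hy : |y| ≤ 1) : |y - Real.sin y| ≤ |y| ^ 3 / 4 := by
  rcases lt_trichotomy y 0 with h | h | h
  · have hy' : -y ≤ 1 := by rw [abs_of_neg h] at hy; linarith
    have h1 : Real.sin (-y) < -y := Real.sin_lt (by linarith)
    have h2 : -y - (-y) ^ 3 / 4 < Real.sin (-y) := by have := Real.sin_gt_sub_cube (x := -y) (by linarith); nlinarith [pow_pos (neg_pos.mpr h) 3]
    rw [Real.sin_neg] at h1 h2
    rw [abs_of_neg h, abs_of_nonpos (by linarith)]
    nlinarith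
  · simp [h]
  · have h1 := Real.sin_lt h
    have h2 : y - y ^ 3 / 4 < Real.sin y := by have := Real.sin_gt_sub_cube h; nlinarith [pow_pos h 3]
    rw [abs_of_pos h, abs_of_nonneg (by linarith)]
    linarith

set_option maxHeartbeats 2000000 in
/-- High-velocity asymptotics of the impact time: for large incoming velocity `v₀`
the next impact time `t₁(v₀)` is attained in `(t₀, t₀ + 2π)`, the time of flight
`t₁(v₀) - t₀` tends to `π`, and `v₀ (t₁(v₀) - t₀ - π) → g(t₀)` where
`g(t) = 2σ - γ (cos (ωt) + cos (ω(t + π)))`. -/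

theorem impact_oscillator_flight_time_asymptotics
    (ω σ γ t₀ : ℝ) (hω : 0 < ω) (hω1 : ω ≠ 1) (hγ : γ = 1 / (1 - ω ^ 2))
    (x : ℝ → ℝ → ℝ)
    (hx : ∀ v₀ t, x v₀ t = (σ - γ * Real.cos (ω * t₀)) * Real.cos (t - t₀) +
      (-v₀ + ω * γ * Real.sin (ω * t₀)) * Real.sin (t - t₀) + γ * Real.cos (ω * t))
    (t₁ : ℝ → ℝ)
    (ht₁ : ∀ v₀, t₁ v₀ = sInf {t : ℝ | t₀ < t ∧ x v₀ t = σ})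
    (g : ℝ → ℝ)
    (hg : ∀ t, g t = 2 * σ - γ * (Real.cos (ω * t) + Real.cos (ω * (t + π)))) :
    (∃ V : ℝ, ∀ v₀ ≥ V, t₀ < t₁ v₀ ∧ t₁ v₀ < t₀ + 2 * π ∧ x v₀ (t₁ v₀) = σ) ∧
    Filter.Tendsto (fun v₀ => t₁ v₀ - t₀) Filter.atTop (nhds π) ∧
    Filter.Tendsto (fun v₀ => v₀ * (t₁ v₀ - t₀ - π)) Filter.atTop (nhds (g t₀)) := by
  have hπ := Real.pi_pos
  have hπ3 := Real.pi_gt_three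
  set A : ℝ := σ - γ * Real.cos (ω * t₀) with hA
  set B : ℝ := ω * γ * Real.sin (ω * t₀) with hB
  set hf : ℝ → ℝ := fun s => A * (Real.cos s - 1) + B * Real.sin s
      + γ * (Real.cos (ω * (t₀ + s)) - Real.cos (ω * t₀)) with hhf
  set L : ℝ := |A| + |B| + |γ| * |ω| + 1 with hLdef
  have hL1 : 1 ≤ L := by
    rw [hLdef]
    have := abs_nonneg A; have := abs_nonneg B
    have := mul_nonneg (abs_nonneg γ) (abs_nonneg ω)
    linarith
  have hL0 : 0 < L := by linarith
  set M : ℝ := L * (2 * π) with hMdef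
  have hM0 : 0 < M := by rw [hMdef]; positivity
  set C : ℝ := π * (M + 1) with hCdef
  have hC0 : 0 < C := by rw [hCdef]; positivity
  set V : ℝ := 2 * C + π * L + 1 with hVdef
  have hV0 : 0 < V := by
    have := mul_pos hπ hL0
    rw [hVdef]; linarith
  -- decomposition of x
  have hdef : ∀ v s : ℝ, x v (t₀ + s) - σ = -(v * Real.sin s) + hf s := by
    intro v s
    rw [hx, hhf]
    simp only
    have e : t₀ + s - t₀ = s := by ring
    rw [e, hA]
    ring
  -- Lipschitz bound for hf
  have hlip : ∀ a b : ℝ, |hf a - hf b| ≤ L * |a - b| := by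
    intro a b
    have e : hf a - hf b = A * (Real.cos a - Real.cos b) + B * (Real.sin a - Real.sin b)
        + γ * (Real.cos (ω * (t₀ + a)) - Real.cos (ω * (t₀ + b))) := by
      rw [hhf]; ring
    have h1 := cos_lip' a b
    have h2 := sin_lip' a b
    have h3 := cos_lip' (ω * (t₀ + a)) (ω * (t₀ + b))
    have e3 : |ω * (t₀ + a) - ω * (t₀ + b)| = |ω| * |a - b| := by
      rw [← abs_mul]; congr 1; ring
    rw [e3] at h3
    have k1 : |A * (Real.cos a - Real.cos b)| ≤ |A| * |a - b| := by
      rw [abs_mul]; exact mul_le_mul_of_nonneg_left h1 (abs_nonneg A)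
    have k2 : |B * (Real.sin a - Real.sin b)| ≤ |B| * |a - b| := by
      rw [abs_mul]; exact mul_le_mul_of_nonneg_left h2 (abs_nonneg B)
    have k3 : |γ * (Real.cos (ω * (t₀ + a)) - Real.cos (ω * (t₀ + b)))|
        ≤ |γ| * (|ω| * |a - b|) := by
      rw [abs_mul]; exact mul_le_mul_of_nonneg_left h3 (abs_nonneg γ)
    calc |hf a - hf b| = |A * (Real.cos a - Real.cos b) + B * (Real.sin a - Real.sin b)
        + γ * (Real.cos (ω * (t₀ + a)) - Real.cos (ω * (t₀ + b)))| := by rw [e]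
      _ ≤ |A * (Real.cos a - Real.cos b) + B * (Real.sin a - Real.sin b)|
          + |γ * (Real.cos (ω * (t₀ + a)) - Real.cos (ω * (t₀ + b)))| := abs_add_le _ _
      _ ≤ |A * (Real.cos a - Real.cos b)| + |B * (Real.sin a - Real.sin b)|
          + |γ * (Real.cos (ω * (t₀ + a)) - Real.cos (ω * (t₀ + b)))| := by
            have := abs_add_le (A * (Real.cos a - Real.cos b)) (B * (Real.sin a - Real.sin b))
            linarith
      _ ≤ |A| * |a - b| + |B| * |a - b| + |γ| * (|ω| * |a - b|) := by linarith
      _ ≤ L * |a - b| := by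
          rw [hLdef]
          have := abs_nonneg (a - b)
          nlinarith
  have hf0 : hf 0 = 0 := by rw [hhf]; simp
  have hb : ∀ s : ℝ, |hf s| ≤ L * |s| := by
    intro s
    have := hlip s 0
    simpa [hf0] using this
  -- C/v ≤ 1/2 for v ≥ V
  have hhalf : ∀ v : ℝ, V ≤ v → C / v ≤ 1 / 2 := by
    intro v hv
    have hv0 : 0 < v := lt_of_lt_of_le hV0 hv
    rw [div_le_iff₀ hv0]
    have := mul_pos hπ hL0
    rw [hVdef] at hv
    linarith
  -- key structural lemma
  have key : ∀ v : ℝ, V ≤ v →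
      (t₀ + π - C / v ≤ t₁ v ∧ t₁ v ≤ t₀ + π + C / v) ∧ x v (t₁ v) = σ := by
    intro v hv
    have hv0 : 0 < v := lt_of_lt_of_le hV0 hv
    have hvV : 2 * C + π * L + 1 ≤ v := by rw [hVdef] at hv; exact hv
    set δ : ℝ := C / v with hδdef
    have hδ0 : 0 < δ := div_pos hC0 hv0
    have hδhalf : δ ≤ 1 / 2 := hhalf v hv
    have hδπ : δ < π := by linarith
    have hMδ : v * (2 / π * δ) = 2 * (M + 1) := by
      rw [hδdef, hCdef]
      field_simp
    -- negativity on (t₀, t₀ + π - δ]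
    have hneg : ∀ t : ℝ, t₀ < t → t ≤ t₀ + π - δ → x v t < σ := by
      intro t h1 h2
      have hs := hdef v (t - t₀)
      have e : t₀ + (t - t₀) = t := by ring
      rw [e] at hs
      set s : ℝ := t - t₀ with hsdef
      have hs0 : 0 < s := by rw [hsdef]; linarith
      have hsub : s ≤ π - δ := by rw [hsdef]; linarith
      rcases le_or_gt s (π / 2) with hcase | hcase
      · have hj : 2 / π * s ≤ Real.sin s := Real.mul_le_sin hs0.le hcase
        have hb1 : hf s ≤ L * s := by
          have := hb s
          rw [abs_of_pos hs0] at this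
          exact le_trans (le_abs_self _) this
        have h4 : L * s < v * (2 / π * s) := by
          rw [show v * (2 / π * s) = (2 * v / π) * s by ring]
          apply mul_lt_mul_of_pos_right _ hs0
          rw [lt_div_iff₀ hπ]
          nlinarith [mul_pos hπ hL0]
        have h5 : v * (2 / π * s) ≤ v * Real.sin s :=
          mul_le_mul_of_nonneg_left hj hv0.le
        have h6 : hf s < v * Real.sin s := lt_of_le_of_lt hb1 (lt_of_lt_of_le h4 h5)
        linarith
      · have hps : 0 ≤ π - s := by linarith
        have hps2 : π - s ≤ π / 2 := by linarith
        have hj : 2 / π * (π - s) ≤ Real.sin (π - s) := Real.mul_le_sin hps hps2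
        rw [Real.sin_pi_sub] at hj
        have hδle : δ ≤ π - s := by linarith
        have hb1 : hf s ≤ M := by
          have h6 := hb s
          rw [abs_of_pos hs0] at h6
          have h7 : L * s ≤ L * (2 * π) := by
            apply mul_le_mul_of_nonneg_left _ hL0.le
            linarith
          rw [hMdef]
          have := le_abs_self (hf s)
          linarith
        have hsin : 2 / π * δ ≤ Real.sin s := by
          refine le_trans ?_ hj
          apply mul_le_mul_of_nonneg_left hδle
          positivity
        have hvs : 2 * (M + 1) ≤ v * Real.sin s := by
          have := mul_le_mul_of_nonneg_left hsin hv0.le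
          linarith [hMδ]
        linarith
    -- positivity at t₀ + π + δ
    have hpos : σ < x v (t₀ + (π + δ)) := by
      have hs := hdef v (π + δ)
      have hsinval : Real.sin (π + δ) = -Real.sin δ := by
        rw [Real.sin_add]; simp
      have hj : 2 / π * δ ≤ Real.sin δ := Real.mul_le_sin hδ0.le (by linarith)
      have hb1 : -M ≤ hf (π + δ) := by
        have h6 := hb (π + δ)
        rw [abs_of_pos (by linarith : (0:ℝ) < π + δ)] at h6
        have h7 : L * (π + δ) ≤ L * (2 * π) := by
          apply mul_le_mul_of_nonneg_left _ hL0.le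
          linarith
        rw [hMdef]
        have := neg_abs_le (hf (π + δ))
        have := abs_nonneg (hf (π + δ))
        nlinarith [hb (π + δ)]
      have hvs : 2 * (M + 1) ≤ v * Real.sin δ := by
        have := mul_le_mul_of_nonneg_left hj hv0.le
        linarith [hMδ]
      rw [hsinval] at hs
      nlinarith
    -- continuity
    have hcont : Continuous (x v) := by
      have e : x v = fun t => A * Real.cos (t - t₀) + (-v + B) * Real.sin (t - t₀)
          + γ * Real.cos (ω * t) := funext (hx v)
      rw [e]; fun_prop
    have hab : t₀ + π - δ ≤ t₀ + π + δ := by linarith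
    have ha : x v (t₀ + π - δ) < σ :=
      hneg _ (by linarith) (le_refl _)
    have hb' : σ < x v (t₀ + π + δ) := by
      have e : t₀ + π + δ = t₀ + (π + δ) := by ring
      rw [e]; exact hpos
    obtain ⟨r, hrI, hrx⟩ := intermediate_value_Icc hab hcont.continuousOn ⟨ha.le, hb'.le⟩
    set T : Set ℝ := {t : ℝ | x v t = σ} ∩ Set.Ici (t₀ + π - δ) with hTdef
    have hTc : IsClosed T := (isClosed_eq hcont continuous_const).inter isClosed_Ici
    have hrT : r ∈ T := ⟨hrx, hrI.1⟩
    have hbdd : BddBelow T := ⟨t₀ + π - δ, fun t ht => ht.2⟩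
    have hST : {t : ℝ | t₀ < t ∧ x v t = σ} = T := by
      ext t
      simp only [hTdef, Set.mem_setOf_eq, Set.mem_inter_iff, Set.mem_Ici]
      constructor
      · rintro ⟨h1, h2⟩
        refine ⟨h2, ?_⟩
        by_contra hcon
        push_neg at hcon
        exact absurd h2 (ne_of_lt (hneg t h1 hcon.le))
      · rintro ⟨h1, h2⟩
        exact ⟨by linarith, h1⟩
    have ht1v : t₁ v = sInf T := by rw [ht₁ v, hST]
    have hmem := hTc.csInf_mem ⟨r, hrT⟩ hbdd
    have hle : sInf T ≤ r := csInf_le hbdd hrT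
    refine ⟨⟨?_, ?_⟩, ?_⟩
    · rw [ht1v]; exact hmem.2
    · rw [ht1v]; linarith [hrI.2]
    · rw [ht1v]; exact hmem.1
  -- value of g t₀
  have hgval : g t₀ = -(hf π) := by
    rw [hg, hhf]
    simp only [Real.cos_pi, Real.sin_pi]
    rw [hA]
    ring
  refine ⟨⟨V, fun v hv => ?_⟩, ?_, ?_⟩
  · obtain ⟨⟨k1, k2⟩, k3⟩ := key v hv
    have hh := hhalf v hv
    exact ⟨by linarith, by linarith, k3⟩
  · -- flight time tends to π
    have h0 : Filter.Tendsto (fun v => t₁ v - t₀ - π) Filter.atTop (nhds 0) := by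
      rw [tendsto_zero_iff_abs_tendsto_zero]
      apply squeeze_zero' (Filter.Eventually.of_forall fun v => abs_nonneg _)
        (g := fun v => C / v)
      · filter_upwards [Filter.eventually_ge_atTop V] with v hv
        obtain ⟨⟨k1, k2⟩, _⟩ := key v hv
        rw [abs_le]
        constructor <;> linarith
      · exact Filter.Tendsto.div_atTop tendsto_const_nhds Filter.tendsto_id
    have h1 := h0.add_const π
    simp only [zero_add, sub_add_cancel] at h1
    exact h1
  · -- rescaled limit
    have h0 : Filter.Tendsto (fun v => v * (t₁ v - t₀ - π) - g t₀) Filter.atTop (nhds 0) := by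
      rw [tendsto_zero_iff_abs_tendsto_zero]
      apply squeeze_zero' (Filter.Eventually.of_forall fun v => abs_nonneg _)
        (g := fun v => (C ^ 3 / 4) / v ^ 2 + (L * C) / v)
      · filter_upwards [Filter.eventually_ge_atTop V] with v hv
        obtain ⟨⟨k1, k2⟩, k3⟩ := key v hv
        have hv0 : 0 < v := lt_of_lt_of_le hV0 hv
        set u : ℝ := t₁ v - t₀ - π with hudef
        have hu : |u| ≤ C / v := by
          rw [abs_le]
          constructor <;> linarith [hudef]
        have hu1 : |u| ≤ 1 := le_trans hu (by linarith [hhalf v hv])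
        have heq := hdef v (π + u)
        have e : t₀ + (π + u) = t₁ v := by rw [hudef]; ring
        rw [e, k3] at heq
        have hsinval : Real.sin (π + u) = -Real.sin u := by rw [Real.sin_add]; simp
        rw [hsinval] at heq
        have heq2 : v * Real.sin u = -(hf (π + u)) := by linear_combination -heq
        have hlipu : |hf (π + u) - hf π| ≤ L * |u| := by
          have := hlip (π + u) π
          simpa using this
        have hcube := cube_bound' hu1
        have main : |v * u - g t₀| ≤ v * (|u| ^ 3 / 4) + L * |u| := by
          have e1 : v * u - g t₀ = v * (u - Real.sin u) + (v * Real.sin u - g t₀) := by ring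
          rw [e1]
          refine le_trans (abs_add_le _ _) (add_le_add ?_ ?_)
          · rw [abs_mul, abs_of_pos hv0]
            exact mul_le_mul_of_nonneg_left hcube hv0.le
          · rw [heq2, hgval]
            have e2 : -(hf (π + u)) - -(hf π) = -(hf (π + u) - hf π) := by ring
            rw [e2, abs_neg]
            exact hlipu
        have hpow : |u| ^ 3 ≤ (C / v) ^ 3 := pow_le_pow_left₀ (abs_nonneg u) hu 3
        have e4 : v * ((C / v) ^ 3 / 4) = (C ^ 3 / 4) / v ^ 2 := by
          field_simp
        have e5 : L * (C / v) = (L * C) / v := by ring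
        calc |v * u - g t₀| ≤ v * (|u| ^ 3 / 4) + L * |u| := main
          _ ≤ v * ((C / v) ^ 3 / 4) + L * (C / v) := by
              refine add_le_add (mul_le_mul_of_nonneg_left (by linarith) hv0.le)
                (mul_le_mul_of_nonneg_left hu hL0.le)
          _ = (C ^ 3 / 4) / v ^ 2 + (L * C) / v := by rw [e4, e5]
      · have hb1 : Filter.Tendsto (fun v : ℝ => (C ^ 3 / 4) / v ^ 2) Filter.atTop (nhds 0) :=
          Filter.Tendsto.div_atTop tendsto_const_nhds (Filter.tendsto_pow_atTop (by norm_num))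
        have hb2 : Filter.Tendsto (fun v : ℝ => (L * C) / v) Filter.atTop (nhds 0) :=
          Filter.Tendsto.div_atTop tendsto_const_nhds Filter.tendsto_id
        simpa using hb1.add hb2
    have h1 := h0.add_const (g t₀)
    simp only [zero_add, sub_add_cancel] at h1
    exact h1
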